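/- Let g, h : Fin m → ℝ with h i > 0 for all i, λ ≥ 0, and suppose g 1/h 1 ≥ g 2/h 2 ≥ ... ≥ g m/h m. Define obj(J) = (∑_{i∈J} g i)²/(λ + ∑_{i∈J} h i). If J ⊆ {i : g i > 0} is nonempty and not a prefix of the ratio-sorted order restricted to positive-gradient indices (i.e., there exist j ∈ J and i ∉ J with g i > 0 and g i/h i ≥ g j/h j), then obj(J) ≤ max{obj(J \ {j}), obj(J ∪ {i})} for such a pair i, j (assuming λ > 0 or |J| > 1). -/
import Mathlib


/-- Exchange step: a non-prefix positive-gradient set is dominated by removing the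
violating element `j` or adding the violating element `i`. -/
theorem exchange_step {m : ℕ} (g h : Fin m → ℝ) (hpos : ∀ i, 0 < h i)
    (lam : ℝ) (hlam : 0 ≤ lam)
    (hsorted : ∀ i j : Fin m, i ≤ j → g i * h j ≥ g j * h i)
    (obj : Finset (Fin m) → ℝ)
    (hobj : ∀ J, obj J = (∑ i ∈ J, g i) ^ 2 / (lam + ∑ i ∈ J, h i))
    (J : Finset (Fin m)) (hJpos : ∀ i ∈ J, 0 < g i) (hJne : J.Nonempty)
    (i j : Fin m) (hjJ : j ∈ J) (hiJ : i ∉ J) (hgi : 0 < g i)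
    (hij : g i * h j ≥ g j * h i)
    (hreg : 0 < lam ∨ 1 < J.card) :
    obj J ≤ max (obj (J.erase j)) (obj (insert i J)) := by
  by_contra hcon
  push_neg at hcon
  rw [max_lt_iff] at hcon
  obtain ⟨h1, h2⟩ := hcon
  rw [hobj, hobj] at h1
  rw [hobj, hobj] at h2
  set S := ∑ x ∈ J, g x with hS
  set H := ∑ x ∈ J, h x with hH
  have hsumg : ∑ x ∈ J.erase j, g x = S - g j := by
    have := Finset.sum_erase_add J g hjJ
    linarith
  have hsumh : ∑ x ∈ J.erase j, h x = H - h j := by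
    have := Finset.sum_erase_add J h hjJ
    linarith
  have hinsg : ∑ x ∈ insert i J, g x = g i + S := Finset.sum_insert hiJ
  have hinsh : ∑ x ∈ insert i J, h x = h i + H := Finset.sum_insert hiJ
  rw [hsumg, hsumh] at h1
  rw [hinsg, hinsh] at h2
  have hgj : 0 < g j := hJpos j hjJ
  have hhj : 0 < h j := hpos j
  have hhi : 0 < h i := hpos i
  -- denominator positivity
  have hHpos : 0 < lam + H := by
    have : 0 < H := Finset.sum_pos (fun x _ => hpos x) hJne
    linarith
  have hCpos : 0 < lam + (H - h j) := by
    rcases hreg with hl | hc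
    · have : (0:ℝ) ≤ H - h j := by
        have := Finset.sum_erase_add J h hjJ
        have hnn : (0:ℝ) ≤ ∑ x ∈ J.erase j, h x :=
          Finset.sum_nonneg (fun x _ => (hpos x).le)
        linarith
      linarith
    · have hne : (J.erase j).Nonempty := by
        rw [← Finset.card_pos, Finset.card_erase_of_mem hjJ]
        omega
      have : 0 < ∑ x ∈ J.erase j, h x := Finset.sum_pos (fun x _ => hpos x) hne
      linarith
  have hIpos : 0 < lam + (h i + H) := by linarith
  -- cross-multiply
  have A1 : (S - g j) ^ 2 * (lam + H) < S ^ 2 * (lam + (H - h j)) := by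
    have := (div_lt_div_iff₀ hCpos hHpos).mp h1
    linarith
  have A2 : (g i + S) ^ 2 * (lam + H) < S ^ 2 * (lam + (h i + H)) := by
    have := (div_lt_div_iff₀ hIpos hHpos).mp h2
    linarith
  -- algebraic contradiction
  nlinarith [mul_pos hgi hgj, mul_pos (mul_pos hgi hgj) hHpos, sq_nonneg S,
    mul_le_mul_of_nonneg_left hij (sq_nonneg S),
    mul_lt_mul_of_pos_left A1 hgi,
    mul_lt_mul_of_pos_left A2 hgj]
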